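/- arXiv:1607.08502 — 4 statements merged into one kernel-verified Lean document; each statement's English description precedes it below -/
import Mathlib

section
/- Let γ ≥ 2 be an integer and C_* > 0, ξ, ξ_⊗ ≥ 0. Let {η_ℓ}_{ℓ≥1} and {η_{ℓ,⊗}}_{ℓ≥1} be sequences of nonnegative reals satisfying η_1 ≤ ξ, η_ℓ ≤ ξ + C_* η_{ℓ-1}^γ for ℓ ≥ 2, η_{1,⊗}² ≤ ξ_⊗², and η_{ℓ,⊗}² ≤ ξ_⊗² + 2 ξ C_* η_{ℓ-1}^γ + C_*² η_{ℓ-1,⊗}^{2γ} for ℓ ≥ 2. If C_* γ > 1 and max{ξ, ξ_⊗} ≤ ((γ−1)/γ) · (C_* γ)^{−1/(γ−1)}, then max{η_ℓ, η_{ℓ,⊗}} ≤ (γ/(γ−1)) · max{ξ, ξ_⊗} < 1 for all ℓ ≥ 1, and in the case γ = 2 one has max{η_ℓ, η_{ℓ,⊗}} ≤ 2 max{ξ, ξ_⊗} / (1 + √(1 − 4 C_* max{ξ, ξ_⊗})) < 1 for all ℓ ≥ 1. -/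
set_option maxHeartbeats 2000000 in
/-- Tensor-space adaptation of the multigrid recursion lemma: coupled recursive bounds
for the sequences `η ℓ` and `η⊗ ℓ`. -/
theorem stmt_1 (η ηt : ℕ → ℝ) (γ : ℕ) (hγ : 2 ≤ γ) (Cstar ξ ξt : ℝ)
    (hCstar : 0 < Cstar) (hξ : 0 ≤ ξ) (hξt : 0 ≤ ξt)
    (hη_nonneg : ∀ ℓ : ℕ, 1 ≤ ℓ → 0 ≤ η ℓ)
    (hηt_nonneg : ∀ ℓ : ℕ, 1 ≤ ℓ → 0 ≤ ηt ℓ)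
    (hη1 : η 1 ≤ ξ)
    (hηrec : ∀ ℓ : ℕ, 1 ≤ ℓ → η (ℓ + 1) ≤ ξ + Cstar * η ℓ ^ γ)
    (hηt1 : ηt 1 ^ 2 ≤ ξt ^ 2)
    (hηtrec : ∀ ℓ : ℕ, 1 ≤ ℓ →
      ηt (ℓ + 1) ^ 2 ≤ ξt ^ 2 + 2 * ξ * Cstar * η ℓ ^ γ + Cstar ^ 2 * ηt ℓ ^ (2 * γ))
    (hCγ : 1 < Cstar * γ)
    (hξsmall : max ξ ξt ≤ ((γ : ℝ) - 1) / γ * (Cstar * γ) ^ (-(1 : ℝ) / ((γ : ℝ) - 1))) :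
    (∀ ℓ : ℕ, 1 ≤ ℓ →
        max (η ℓ) (ηt ℓ) ≤ (γ : ℝ) / ((γ : ℝ) - 1) * max ξ ξt ∧
          (γ : ℝ) / ((γ : ℝ) - 1) * max ξ ξt < 1) ∧
      (γ = 2 → ∀ ℓ : ℕ, 1 ≤ ℓ →
        max (η ℓ) (ηt ℓ) ≤ 2 * max ξ ξt / (1 + Real.sqrt (1 - 4 * Cstar * max ξ ξt)) ∧
          2 * max ξ ξt / (1 + Real.sqrt (1 - 4 * Cstar * max ξ ξt)) < 1) := by
  have hγR : (2:ℝ) ≤ (γ:ℝ) := by exact_mod_cast hγ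
  have hγ1 : (0:ℝ) < (γ:ℝ) - 1 := by linarith
  have hγ0 : (0:ℝ) < (γ:ℝ) := by linarith
  have hCγ0 : (0:ℝ) < Cstar * γ := by positivity
  obtain ⟨M, hMdef⟩ : ∃ x : ℝ, x = max ξ ξt := ⟨_, rfl⟩
  rw [← hMdef] at hξsmall ⊢
  have hξM : ξ ≤ M := hMdef ▸ le_max_left _ _
  have hξtM : ξt ≤ M := hMdef ▸ le_max_right _ _
  have hM0 : 0 ≤ M := le_trans hξ hξM
  obtain ⟨B, hBdef⟩ : ∃ x : ℝ, x = (γ:ℝ)/((γ:ℝ)-1) * M := ⟨_, rfl⟩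
  rw [← hBdef]
  have hB0 : 0 ≤ B := by rw [hBdef]; positivity
  obtain ⟨κ, hκdef⟩ : ∃ x : ℝ, x = (Cstar * (γ:ℝ)) ^ (-(1:ℝ)/((γ:ℝ)-1)) := ⟨_, rfl⟩
  rw [← hκdef] at hξsmall
  have hκ0 : 0 < κ := hκdef ▸ Real.rpow_pos_of_pos hCγ0 _
  have hBκ : B ≤ κ := by
    rw [hBdef]
    calc (γ:ℝ)/((γ:ℝ)-1) * M ≤ (γ:ℝ)/((γ:ℝ)-1) * (((γ:ℝ)-1)/γ * κ) := by
          exact mul_le_mul_of_nonneg_left hξsmall (by positivity)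
      _ = κ := by field_simp
  have hcast : ((γ - 1 : ℕ):ℝ) = (γ:ℝ) - 1 := by
    have : (1:ℕ) ≤ γ := by omega
    push_cast [Nat.cast_sub this]
    ring
  have hκpow : Cstar * κ ^ (γ - 1) = 1/(γ:ℝ) := by
    have h1 : κ ^ (γ - 1) = (Cstar * (γ:ℝ))⁻¹ := by
      rw [hκdef, ← Real.rpow_natCast _ (γ - 1), hcast,
        ← Real.rpow_mul hCγ0.le]
      have : (-(1:ℝ)/((γ:ℝ)-1)) * ((γ:ℝ)-1) = -1 := by
        field_simp
      rw [this, Real.rpow_neg_one]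
    rw [h1]
    field_simp
  have hγsplit : γ = (γ - 1) + 1 := by omega
  have hkey : ∀ x : ℝ, 0 ≤ x → x ≤ B → Cstar * x ^ γ ≤ 1/(γ:ℝ) * B := by
    intro x hx hxB
    have h1 : x ^ γ = x ^ (γ - 1) * x := by
      conv_lhs => rw [hγsplit]
      rw [pow_succ]
    have h2 : x ^ (γ - 1) ≤ κ ^ (γ - 1) :=
      pow_le_pow_left₀ hx (hxB.trans hBκ) _
    calc Cstar * x ^ γ = Cstar * x ^ (γ - 1) * x := by rw [h1]; ring
      _ ≤ Cstar * κ ^ (γ - 1) * B := by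
          apply mul_le_mul (mul_le_mul_of_nonneg_left h2 hCstar.le) hxB hx
          positivity
      _ = 1/(γ:ℝ) * B := by rw [hκpow]
  have hMB : M + 1/(γ:ℝ) * B = B := by
    subst hBdef
    field_simp
    ring
  have hMleB : M ≤ B := by
    have h1 : (1:ℝ) ≤ (γ:ℝ)/((γ:ℝ)-1) := by
      rw [le_div_iff₀ hγ1]; linarith
    calc M = 1 * M := (one_mul M).symm
      _ ≤ (γ:ℝ)/((γ:ℝ)-1) * M := mul_le_mul_of_nonneg_right h1 hM0
      _ = B := hBdef.symm
  have sq_le : ∀ a b : ℝ, 0 ≤ b → a ^ 2 ≤ b ^ 2 → a ≤ b := by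
    intro a b hb h
    nlinarith [sq_nonneg (a - b), sq_nonneg (a + b)]
  have main : ∀ ℓ : ℕ, 1 ≤ ℓ → η ℓ ≤ B ∧ ηt ℓ ≤ B := by
    intro ℓ hℓ
    induction ℓ with
    | zero => omega
    | succ n ih =>
      rcases Nat.lt_or_ge 1 (n + 1) with h1 | h1
      · have hn : 1 ≤ n := by omega
        obtain ⟨ihη, ihηt⟩ := ih hn
        have e1 : Cstar * η n ^ γ ≤ 1/(γ:ℝ) * B := hkey _ (hη_nonneg n hn) ihη
        have e2 : Cstar * ηt n ^ γ ≤ 1/(γ:ℝ) * B := hkey _ (hηt_nonneg n hn) ihηt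
        have e1' : 0 ≤ Cstar * η n ^ γ :=
          mul_nonneg hCstar.le (pow_nonneg (hη_nonneg n hn) _)
        have e2' : 0 ≤ Cstar * ηt n ^ γ :=
          mul_nonneg hCstar.le (pow_nonneg (hηt_nonneg n hn) _)
        constructor
        · have := hηrec n hn
          linarith
        · have hrec := hηtrec n hn
          have hBg0 : 0 ≤ 1/(γ:ℝ) * B := by positivity
          have p1 : ξt ^ 2 ≤ M ^ 2 := pow_le_pow_left₀ hξt hξtM 2
          have p2 : ξ * (Cstar * η n ^ γ) ≤ M * (1/(γ:ℝ) * B) :=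
            mul_le_mul hξM e1 e1' hM0
          have p3 : (Cstar * ηt n ^ γ) ^ 2 ≤ (1/(γ:ℝ) * B) ^ 2 :=
            pow_le_pow_left₀ e2' e2 2
          have e3' : Cstar ^ 2 * ηt n ^ (2 * γ) ≤ (1/(γ:ℝ) * B) ^ 2 := by
            have e3 : Cstar ^ 2 * ηt n ^ (2 * γ) = (Cstar * ηt n ^ γ) ^ 2 := by
              rw [pow_mul]; ring
            rw [e3]; exact p3
          have h4 : ηt (n + 1) ^ 2 ≤ (M + 1/(γ:ℝ) * B) ^ 2 := by
            calc ηt (n + 1) ^ 2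
                ≤ ξt ^ 2 + 2 * ξ * Cstar * η n ^ γ + Cstar ^ 2 * ηt n ^ (2 * γ) := hrec
              _ ≤ M ^ 2 + 2 * (M * (1/(γ:ℝ) * B)) + (1/(γ:ℝ) * B) ^ 2 := by
                  linarith [p1, p2, e3']
              _ = (M + 1/(γ:ℝ) * B) ^ 2 := by ring
          rw [hMB] at h4
          exact sq_le _ _ hB0 h4
      · have hn : n = 0 := by omega
        subst hn
        constructor
        · exact hη1.trans (hξM.trans hMleB)
        · apply sq_le _ _ hB0
          have h2 : ξt ^ 2 ≤ M ^ 2 := pow_le_pow_left₀ hξt hξtM 2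
          have h3 : M ^ 2 ≤ B ^ 2 := pow_le_pow_left₀ hM0 hMleB 2
          linarith
  have hκlt1 : κ < 1 := by
    rw [hκdef]
    apply Real.rpow_lt_one_of_one_lt_of_neg hCγ
    apply div_neg_of_neg_of_pos (by norm_num) hγ1
  have hBlt1 : B < 1 := lt_of_le_of_lt hBκ hκlt1
  constructor
  · intro ℓ hℓ
    obtain ⟨h1, h2⟩ := main ℓ hℓ
    exact ⟨max_le h1 h2, hBlt1⟩
  · intro hγ2
    subst hγ2
    -- γ = 2 case
    have h4CM : 4 * Cstar * M ≤ 1 := by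
      have hκinv : κ = (Cstar * ((2:ℕ):ℝ))⁻¹ := by
        rw [hκdef, show (-(1:ℝ)/(((2:ℕ):ℝ)-1)) = -1 by norm_num, Real.rpow_neg_one]
      have hξs := hξsmall
      rw [hκinv] at hξs
      have hid : (((2:ℕ):ℝ) - 1)/((2:ℕ):ℝ) * (Cstar * ((2:ℕ):ℝ))⁻¹ * (4 * Cstar) = 1 := by
        push_cast
        field_simp
        ring
      nlinarith [mul_le_mul_of_nonneg_right hξs (by positivity : (0:ℝ) ≤ 4 * Cstar)]
    obtain ⟨s, hsdef⟩ : ∃ x : ℝ, x = Real.sqrt (1 - 4 * Cstar * M) := ⟨_, rfl⟩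
    rw [← hsdef]
    have hs0 : 0 ≤ s := hsdef ▸ Real.sqrt_nonneg _
    have hs2 : s ^ 2 = 1 - 4 * Cstar * M := hsdef ▸ Real.sq_sqrt (by linarith)
    have h1s : (0:ℝ) < 1 + s := by linarith
    obtain ⟨D, hDdef⟩ : ∃ x : ℝ, x = 2 * M / (1 + s) := ⟨_, rfl⟩
    rw [← hDdef]
    have hD0 : 0 ≤ D := hDdef ▸ div_nonneg (by linarith) h1s.le
    have hDeq : Cstar * D ^ 2 + M = D := by
      subst hDdef
      field_simp
      linear_combination M * hs2
    have hMD : M ≤ D := by nlinarith [sq_nonneg D, mul_nonneg hCstar.le (sq_nonneg D)]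
    have hD2M : D ≤ 2 * M := by
      subst hDdef
      apply div_le_self (by linarith) (by linarith)
    have h2M1 : 2 * M < 1 := by
      have hB2M : B = 2 * M := by rw [hBdef]; norm_num
      linarith
    have hDlt1 : D < 1 := lt_of_le_of_lt hD2M h2M1
    have main2 : ∀ ℓ : ℕ, 1 ≤ ℓ → η ℓ ≤ D ∧ ηt ℓ ≤ D := by
      intro ℓ hℓ
      induction ℓ with
      | zero => omega
      | succ n ih =>
        rcases Nat.lt_or_ge 1 (n + 1) with h1 | h1
        · have hn : 1 ≤ n := by omega
          obtain ⟨ihη, ihηt⟩ := ih hn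
          have hηn := hη_nonneg n hn
          have hηtn := hηt_nonneg n hn
          have e1 : Cstar * η n ^ 2 ≤ Cstar * D ^ 2 :=
            mul_le_mul_of_nonneg_left (pow_le_pow_left₀ hηn ihη 2) hCstar.le
          have e2 : Cstar * ηt n ^ 2 ≤ Cstar * D ^ 2 :=
            mul_le_mul_of_nonneg_left (pow_le_pow_left₀ hηtn ihηt 2) hCstar.le
          have e1' : 0 ≤ Cstar * η n ^ 2 := by positivity
          have e2' : 0 ≤ Cstar * ηt n ^ 2 := by positivity
          constructor
          · have := hηrec n hn
            linarith
          · have hrec := hηtrec n hn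
            have p1 : ξt ^ 2 ≤ M ^ 2 := pow_le_pow_left₀ hξt hξtM 2
            have p2 : ξ * (Cstar * η n ^ 2) ≤ M * (Cstar * D ^ 2) :=
              mul_le_mul hξM e1 e1' hM0
            have p3 : (Cstar * ηt n ^ 2) ^ 2 ≤ (Cstar * D ^ 2) ^ 2 :=
              pow_le_pow_left₀ e2' e2 2
            have e3' : Cstar ^ 2 * ηt n ^ (2 * 2) ≤ (Cstar * D ^ 2) ^ 2 := by
              have e3 : Cstar ^ 2 * ηt n ^ (2 * 2) = (Cstar * ηt n ^ 2) ^ 2 := by ring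
              rw [e3]; exact p3
            have h4 : ηt (n + 1) ^ 2 ≤ (M + Cstar * D ^ 2) ^ 2 := by
              calc ηt (n + 1) ^ 2
                  ≤ ξt ^ 2 + 2 * ξ * Cstar * η n ^ 2 + Cstar ^ 2 * ηt n ^ (2 * 2) := hrec
                _ ≤ M ^ 2 + 2 * (M * (Cstar * D ^ 2)) + (Cstar * D ^ 2) ^ 2 := by
                    linarith [p1, p2, e3']
                _ = (M + Cstar * D ^ 2) ^ 2 := by ring
            have hMD' : M + Cstar * D ^ 2 = D := by linarith
            rw [hMD'] at h4
            exact sq_le _ _ hD0 h4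
        · have hn : n = 0 := by omega
          subst hn
          constructor
          · exact hη1.trans (hξM.trans hMD)
          · apply sq_le _ _ hD0
            have h2 : ξt ^ 2 ≤ M ^ 2 := pow_le_pow_left₀ hξt hξtM 2
            have h3 : M ^ 2 ≤ D ^ 2 := pow_le_pow_left₀ hM0 hMD 2
            linarith
    intro ℓ hℓ
    obtain ⟨h1, h2⟩ := main2 ℓ hℓ
    exact ⟨max_le h1 h2, hDlt1⟩
end

section
/- Under the Smoothing property, the Approximation property, the Smoother assumption and the Prolongation assumption, let γ ≥ 2 be an integer, ν₁, ν₂ ≥ 1, set C_* = C_S · C̲_p · C̄_p · (C_S + C_A η(ν₁)) and ξ = max_{1≤ℓ≤L} ‖E^TG_ℓ(ν₁,ν₂)‖₂. If C_* γ > 1 and ξ ≤ ((γ−1)/γ) · (C_* γ)^{−1/(γ−1)}, then the fault-free multigrid iteration matrices satisfy ‖E_ℓ‖₂ ≤ (γ/(γ−1)) ξ < 1 for all ℓ = 1,…,L; i.e., the W-cycle and higher-cycle multigrid methods converge uniformly in the number of levels. -/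
open Matrix Filter
open scoped ENNReal

/-- Spectral norm (ℓ²-operator norm) of a real matrix. -/
noncomputable def specNorm {m n : Type*} [Fintype m] [Fintype n] [DecidableEq n]
    (M : Matrix m n ℝ) : ℝ :=
  ‖LinearMap.toContinuousLinearMap (Matrix.toEuclideanLin M)‖

/-- Spectral radius of a real matrix (computed over the complex spectrum). -/
noncomputable def specRad {n : Type*} [Fintype n] [DecidableEq n]
    (M : Matrix n n ℝ) : ℝ≥0∞ :=
  spectralRadius ℂ (M.map (algebraMap ℝ ℂ))

/-- Euclidean norm of a vector. -/
noncomputable def euclNorm {n : Type*} [Fintype n] (x : n → ℝ) : ℝ :=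
  Real.sqrt (∑ i, (x i) ^ 2)


set_option linter.unusedSectionVars false

section Aux
open scoped Matrix.Norms.L2Operator

variable {m n p : Type*} [Fintype m] [Fintype n] [Fintype p]
  [DecidableEq m] [DecidableEq n] [DecidableEq p]

lemma specNorm_eq_norm (M : Matrix m n ℝ) : specNorm M = ‖M‖ := rfl

lemma specNorm_nonneg (M : Matrix m n ℝ) : 0 ≤ specNorm M := by
  rw [specNorm_eq_norm]; exact norm_nonneg M

lemma specNorm_zero : specNorm (0 : Matrix m n ℝ) = 0 := by
  rw [specNorm_eq_norm]; exact norm_zero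

lemma specNorm_add_le (M K : Matrix m n ℝ) :
    specNorm (M + K) ≤ specNorm M + specNorm K := by
  simp only [specNorm_eq_norm]; exact norm_add_le M K

lemma specNorm_mul_le (M : Matrix m n ℝ) (K : Matrix n p ℝ) :
    specNorm (M * K) ≤ specNorm M * specNorm K := by
  simp only [specNorm_eq_norm]; exact Matrix.l2_opNorm_mul M K

lemma specNorm_pow_le (M : Matrix n n ℝ) : ∀ k : ℕ, 1 ≤ k →
    specNorm (M ^ k) ≤ specNorm M ^ k := by
  intro k hk
  induction k with
  | zero => omega
  | succ k ih =>
    rcases Nat.lt_or_ge k 1 with h | h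
    · interval_cases k
      · simpa using le_refl (specNorm M)
    · calc specNorm (M ^ (k + 1)) = specNorm (M ^ k * M) := by rw [pow_succ]
        _ ≤ specNorm (M ^ k) * specNorm M := specNorm_mul_le _ _
        _ ≤ specNorm M ^ k * specNorm M :=
            mul_le_mul_of_nonneg_right (ih h) (specNorm_nonneg M)
        _ = specNorm M ^ (k + 1) := (pow_succ _ _).symm

lemma euclNorm_eq_norm (x : n → ℝ) :
    euclNorm x = ‖((WithLp.equiv 2 (n → ℝ)).symm x : EuclideanSpace ℝ n)‖ := by
  rw [EuclideanSpace.norm_eq]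
  simp [euclNorm, Real.norm_eq_abs, sq_abs]

lemma euclNorm_nonneg (x : n → ℝ) : 0 ≤ euclNorm x := Real.sqrt_nonneg _

lemma euclNorm_pos {x : n → ℝ} (hx : x ≠ 0) : 0 < euclNorm x := by
  rw [euclNorm_eq_norm]
  rw [norm_pos_iff]
  intro h
  apply hx
  have := congrArg (WithLp.equiv 2 (n → ℝ)) h
  simpa using this

lemma euclNorm_mulVec_le (M : Matrix m n ℝ) (x : n → ℝ) :
    euclNorm (M.mulVec x) ≤ specNorm M * euclNorm x := by
  have h := (LinearMap.toContinuousLinearMap (Matrix.toEuclideanLin M)).le_opNorm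
    ((WithLp.equiv 2 (n → ℝ)).symm x)
  simpa [euclNorm_eq_norm, specNorm, Matrix.toEuclideanLin_apply_piLp_toLp] using h

lemma specNorm_le_bound (M : Matrix m n ℝ) {C : ℝ} (hC : 0 ≤ C)
    (h : ∀ x, euclNorm (M.mulVec x) ≤ C * euclNorm x) : specNorm M ≤ C := by
  refine ContinuousLinearMap.opNorm_le_bound _ hC fun x => ?_
  have h2 := h ((WithLp.equiv 2 (n → ℝ)) x)
  rw [euclNorm_eq_norm, euclNorm_eq_norm, Equiv.symm_apply_apply] at h2
  simpa [Matrix.toEuclideanLin_apply] using h2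

end Aux

section Aux2
open scoped Matrix.Norms.L2Operator
variable {m n : Type*} [Fintype m] [Fintype n] [DecidableEq m] [DecidableEq n]

lemma specNorm_sub_le (M K : Matrix m n ℝ) :
    specNorm (M - K) ≤ specNorm M + specNorm K := by
  simp only [specNorm_eq_norm]; exact norm_sub_le M K

lemma specNorm_pos {M : Matrix m n ℝ} (h : M ≠ 0) : 0 < specNorm M := by
  rw [specNorm_eq_norm]; exact norm_pos_iff.mpr h
end Aux2

set_option maxHeartbeats 2000000 in
/-- W-cycle (and higher-cycle) convergence of the fault-free multigrid method, uniformly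
in the number of levels: if `C_* γ > 1` and
`ξ = max_{1 ≤ ℓ ≤ L} ‖E^TG_ℓ(ν₁,ν₂)‖₂ ≤ ((γ-1)/γ)(C_* γ)^{-1/(γ-1)}`, then
`‖E_ℓ‖₂ ≤ (γ/(γ-1)) ξ < 1` for all `ℓ = 1,…,L`.
Level `ℓ+1` plays the role of level `ℓ ∈ {1,…,L}` of the paper. -/
theorem stmt_6 (L : ℕ) (n : ℕ → ℕ)
    (A : ∀ ℓ : ℕ, Matrix (Fin (n ℓ)) (Fin (n ℓ)) ℝ)
    (P : ∀ ℓ : ℕ, Matrix (Fin (n (ℓ + 1))) (Fin (n ℓ)) ℝ)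
    (N : ∀ ℓ : ℕ, Matrix (Fin (n ℓ)) (Fin (n ℓ)) ℝ)
    (hA : ∀ ℓ, ℓ ≤ L → (A ℓ).PosDef)
    (hP : ∀ ℓ, ℓ < L → Function.Injective (fun x => (P ℓ).mulVec x))
    (hGal : ∀ ℓ, ℓ < L → A ℓ = (P ℓ)ᵀ * A (ℓ + 1) * P ℓ)
    (η : ℕ → ℝ) (hη0 : ∀ ν, 0 ≤ η ν) (hηlim : Tendsto η atTop (nhds 0))
    (hSmooth : ∀ ℓ, ℓ < L → ∀ ν : ℕ,
      specNorm (A (ℓ + 1) * (1 - N (ℓ + 1) * A (ℓ + 1)) ^ ν) ≤ η ν * specNorm (A (ℓ + 1)))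
    (C_A : ℝ)
    (hApprox : ∀ ℓ, ℓ < L →
      specNorm ((1 - P ℓ * (A ℓ)⁻¹ * (P ℓ)ᵀ * A (ℓ + 1)) * (A (ℓ + 1))⁻¹)
        ≤ C_A / specNorm (A (ℓ + 1)))
    (C_S : ℝ)
    (hSmootherRad : ∀ ℓ, ℓ < L → specRad (1 - N (ℓ + 1) * A (ℓ + 1)) ≤ 1)
    (hSmootherNorm : ∀ ℓ, ℓ < L → ∀ ν : ℕ, 1 ≤ ν →
      specNorm ((1 - N (ℓ + 1) * A (ℓ + 1)) ^ ν) ≤ C_S)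
    (Cp_lo Cp_hi : ℝ)
    (hProl : ∀ ℓ, ℓ < L → ∀ x : Fin (n ℓ) → ℝ,
      Cp_lo⁻¹ * euclNorm x ≤ euclNorm ((P ℓ).mulVec x) ∧
        euclNorm ((P ℓ).mulVec x) ≤ Cp_hi * euclNorm x)
    (ν₁ ν₂ γ : ℕ) (hν₁ : 1 ≤ ν₁) (hν₂ : 1 ≤ ν₂) (hγ : 2 ≤ γ)
    (E : ∀ ℓ : ℕ, Matrix (Fin (n ℓ)) (Fin (n ℓ)) ℝ)
    (hE0 : E 0 = 0)
    (hErec : ∀ ℓ, ℓ < L →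
      E (ℓ + 1) = (1 - N (ℓ + 1) * A (ℓ + 1)) ^ ν₂ *
        (1 - P ℓ * (1 - E ℓ ^ γ) * (A ℓ)⁻¹ * (P ℓ)ᵀ * A (ℓ + 1)) *
        (1 - N (ℓ + 1) * A (ℓ + 1)) ^ ν₁)
    (Cstar : ℝ) (hCstar : Cstar = C_S * Cp_lo * Cp_hi * (C_S + C_A * η ν₁))
    (ξ : ℝ)
    (hξ : ξ = ⨆ ℓ : Fin L, specNorm ((1 - N ((ℓ : ℕ) + 1) * A ((ℓ : ℕ) + 1)) ^ ν₂ *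
      (1 - P ℓ * (A ℓ)⁻¹ * (P ℓ)ᵀ * A ((ℓ : ℕ) + 1)) *
      (1 - N ((ℓ : ℕ) + 1) * A ((ℓ : ℕ) + 1)) ^ ν₁))
    (hCγ : 1 < Cstar * γ)
    (hξsmall : ξ ≤ ((γ : ℝ) - 1) / γ * (Cstar * γ) ^ (-(1 : ℝ) / ((γ : ℝ) - 1))) :
    ∀ ℓ, 1 ≤ ℓ → ℓ ≤ L →
      specNorm (E ℓ) ≤ (γ : ℝ) / ((γ : ℝ) - 1) * ξ ∧ (γ : ℝ) / ((γ : ℝ) - 1) * ξ < 1 := by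

  intro l hl1 hlL
  have hL1 : 1 ≤ L := le_trans hl1 hlL
  have hγ0 : (0:ℝ) < (γ:ℝ) := by positivity
  have hg2 : (2:ℝ) ≤ (γ:ℝ) := by exact_mod_cast hγ
  have hgm1 : (0:ℝ) < (γ:ℝ) - 1 := by linarith
  have hc1 : (1:ℝ) ≤ (γ:ℝ)/((γ:ℝ)-1) := by rw [le_div_iff₀ hgm1]; linarith
  have hc0 : (0:ℝ) < (γ:ℝ)/((γ:ℝ)-1) := lt_of_lt_of_le one_pos hc1
  -- ξ facts
  have hTGle : ∀ i : Fin L, specNorm ((1 - N ((i : ℕ) + 1) * A ((i : ℕ) + 1)) ^ ν₂ *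
      (1 - P i * (A i)⁻¹ * (P i)ᵀ * A ((i : ℕ) + 1)) *
      (1 - N ((i : ℕ) + 1) * A ((i : ℕ) + 1)) ^ ν₁) ≤ ξ := by
    intro i
    have h := le_ciSup (f := fun ℓ : Fin L =>
        specNorm ((1 - N ((ℓ : ℕ) + 1) * A ((ℓ : ℕ) + 1)) ^ ν₂ *
        (1 - P ℓ * (A ℓ)⁻¹ * (P ℓ)ᵀ * A ((ℓ : ℕ) + 1)) *
        (1 - N ((ℓ : ℕ) + 1) * A ((ℓ : ℕ) + 1)) ^ ν₁))
      (Set.Finite.bddAbove (Set.finite_range _)) i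
    rw [hξ]
    exact h
  have hξ0 : 0 ≤ ξ := le_trans (specNorm_nonneg _) (hTGle ⟨0, hL1⟩)
  have ht0 : (0:ℝ) < Cstar * (γ:ℝ) := lt_trans one_pos hCγ
  -- c * ξ < 1
  have hlt : (γ:ℝ)/((γ:ℝ)-1) * ξ < 1 := by
    have htlt1 : (Cstar * (γ:ℝ)) ^ (-(1:ℝ)/((γ:ℝ)-1)) < 1 :=
      Real.rpow_lt_one_of_one_lt_of_neg hCγ
        (div_neg_of_neg_of_pos (by norm_num) hgm1)
    calc (γ:ℝ)/((γ:ℝ)-1) * ξ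
        ≤ (γ:ℝ)/((γ:ℝ)-1) * (((γ:ℝ)-1)/(γ:ℝ) * (Cstar * γ) ^ (-(1:ℝ)/((γ:ℝ)-1))) :=
          mul_le_mul_of_nonneg_left hξsmall hc0.le
      _ = (Cstar * (γ:ℝ)) ^ (-(1:ℝ)/((γ:ℝ)-1)) := by
          field_simp
      _ < 1 := htlt1
  -- arithmetic core
  have hγ1 : 1 ≤ γ := by omega
  have hγsucc : γ = (γ - 1) + 1 := by omega
  have hgsub : ((γ - 1 : ℕ) : ℝ) = (γ:ℝ) - 1 := by
    rw [Nat.cast_sub hγ1, Nat.cast_one]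
  have ht' : ((Cstar * (γ:ℝ)) ^ (-(1:ℝ)/((γ:ℝ)-1))) ^ (γ - 1) = (Cstar * (γ:ℝ))⁻¹ := by
    rw [← Real.rpow_natCast ((Cstar * (γ:ℝ)) ^ (-(1:ℝ)/((γ:ℝ)-1))) (γ-1),
      ← Real.rpow_mul ht0.le, hgsub, div_mul_cancel₀ _ hgm1.ne', Real.rpow_neg_one]
  have hxi_pow : ξ ^ (γ - 1) ≤ (((γ:ℝ)-1)/(γ:ℝ))^(γ-1) * (Cstar*(γ:ℝ))⁻¹ := by
    calc ξ ^ (γ-1) ≤ ((((γ:ℝ)-1)/(γ:ℝ)) * (Cstar * γ) ^ (-(1:ℝ)/((γ:ℝ)-1)))^(γ-1) :=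
          pow_le_pow_left₀ hξ0 hξsmall _
      _ = (((γ:ℝ)-1)/(γ:ℝ))^(γ-1) * ((Cstar * (γ:ℝ)) ^ (-(1:ℝ)/((γ:ℝ)-1)))^(γ-1) :=
          mul_pow _ _ _
      _ = (((γ:ℝ)-1)/(γ:ℝ))^(γ-1) * (Cstar*(γ:ℝ))⁻¹ := by rw [ht']
  have hCstar0 : (0:ℝ) < Cstar := by nlinarith
  have hpowsplit : ∀ a : ℝ, a ^ γ = a ^ (γ-1) * a := by
    intro a
    rw [← pow_succ, ← hγsucc]
  have hcγ : ((γ:ℝ)/((γ:ℝ)-1)) ^ γ = ((γ:ℝ)/((γ:ℝ)-1))^(γ-1) * ((γ:ℝ)/((γ:ℝ)-1)) :=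
    hpowsplit _
  have hpow1 : ((γ:ℝ)/((γ:ℝ)-1))^(γ-1) * (((γ:ℝ)-1)/(γ:ℝ))^(γ-1) = 1 := by
    rw [← mul_pow]
    rw [show (γ:ℝ)/((γ:ℝ)-1) * (((γ:ℝ)-1)/(γ:ℝ)) = 1 by field_simp]
    exact one_pow _
  have hkey : Cstar * ((γ:ℝ)/((γ:ℝ)-1)) ^ γ * ξ^(γ-1) ≤ 1/((γ:ℝ)-1) := by
    have h1 : Cstar * ((γ:ℝ)/((γ:ℝ)-1)) ^ γ * ξ^(γ-1)
        ≤ Cstar * ((γ:ℝ)/((γ:ℝ)-1)) ^ γ * ((((γ:ℝ)-1)/(γ:ℝ))^(γ-1) * (Cstar*(γ:ℝ))⁻¹) :=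
      mul_le_mul_of_nonneg_left hxi_pow
        (mul_nonneg hCstar0.le (pow_nonneg hc0.le γ))
    refine le_trans h1 (le_of_eq ?_)
    calc Cstar * ((γ:ℝ)/((γ:ℝ)-1)) ^ γ * ((((γ:ℝ)-1)/(γ:ℝ))^(γ-1) * (Cstar*(γ:ℝ))⁻¹)
        = (((γ:ℝ)/((γ:ℝ)-1))^(γ-1) * (((γ:ℝ)-1)/(γ:ℝ))^(γ-1)) *
            (Cstar * (Cstar*(γ:ℝ))⁻¹ * ((γ:ℝ)/((γ:ℝ)-1))) := by
          rw [hcγ]; ring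
      _ = Cstar * (Cstar*(γ:ℝ))⁻¹ * ((γ:ℝ)/((γ:ℝ)-1)) := by rw [hpow1, one_mul]
      _ = 1/((γ:ℝ)-1) := by
          field_simp
  have harith : ξ + Cstar * (((γ:ℝ)/((γ:ℝ)-1)) * ξ)^γ ≤ ((γ:ℝ)/((γ:ℝ)-1)) * ξ := by
    have hξγ : ξ ^ γ = ξ^(γ-1)*ξ := hpowsplit ξ
    have h2 : Cstar * (((γ:ℝ)/((γ:ℝ)-1)) * ξ)^γ ≤ 1/((γ:ℝ)-1) * ξ := by
      calc Cstar * (((γ:ℝ)/((γ:ℝ)-1)) * ξ)^γ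
          = (Cstar * ((γ:ℝ)/((γ:ℝ)-1)) ^ γ * ξ^(γ-1)) * ξ := by rw [mul_pow, hξγ]; ring
        _ ≤ (1/((γ:ℝ)-1)) * ξ := mul_le_mul_of_nonneg_right hkey hξ0
    have h3 : ((γ:ℝ)/((γ:ℝ)-1)) * ξ = ξ + 1/((γ:ℝ)-1) * ξ := by
      field_simp
      ring
    linarith
  -- the induction
  have key : ∀ k, k ≤ L → specNorm (E k) ≤ (γ:ℝ)/((γ:ℝ)-1) * ξ := by
    intro k
    induction k with
    | zero =>
      intro _
      rw [hE0, specNorm_zero]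
      positivity
    | succ k ih =>
      intro hk1
      have hkL : k < L := hk1
      have hIH : specNorm (E k) ≤ (γ:ℝ)/((γ:ℝ)-1) * ξ := ih (Nat.le_of_lt hkL)
      have hTkle : specNorm ((1 - N (k+1) * A (k+1)) ^ ν₂ *
          (1 - P k * (A k)⁻¹ * (P k)ᵀ * A (k+1)) * (1 - N (k+1) * A (k+1)) ^ ν₁) ≤ ξ := by
        have := hTGle ⟨k, hkL⟩
        simpa using this
      by_cases hnk : n k = 0
      · -- degenerate level
        have hem : IsEmpty (Fin (n k)) := by rw [hnk]; infer_instance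
        have hone : (1 - E k ^ γ) = (1 : Matrix (Fin (n k)) (Fin (n k)) ℝ) :=
          Subsingleton.elim _ _
        have hE1 : E (k+1) = (1 - N (k+1) * A (k+1)) ^ ν₂ *
            (1 - P k * (A k)⁻¹ * (P k)ᵀ * A (k+1)) * (1 - N (k+1) * A (k+1)) ^ ν₁ := by
          rw [hErec k hkL, hone, Matrix.mul_one]
        rw [hE1]
        exact le_trans hTkle (by nlinarith)
      · -- nondegenerate level
        have hpos : 0 < n k := Nat.pos_of_ne_zero hnk
        haveI : Nonempty (Fin (n k)) := Fin.pos_iff_nonempty.mp hpos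
        set x₀ : Fin (n k) → ℝ := fun _ => 1 with hx₀def
        have hx₀ : x₀ ≠ 0 := by
          intro h
          have := congrFun h (Classical.arbitrary _)
          norm_num [hx₀def] at this
        have hPx₀ : (P k).mulVec x₀ ≠ 0 := by
          intro h
          exact hx₀ (hP k hkL (by simpa [Matrix.mulVec_zero] using h))
        have hCp_hi : 0 < Cp_hi := by
          have h2 := (hProl k hkL x₀).2
          have h3 := euclNorm_pos hPx₀
          have h4 := euclNorm_pos hx₀
          have h5 : 0 < Cp_hi * euclNorm x₀ := lt_of_lt_of_le h3 h2
          rcases mul_pos_iff.mp h5 with ⟨h6, _⟩ | ⟨_, h7⟩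
          · exact h6
          · linarith
        have hCS0 : 0 ≤ C_S := le_trans (specNorm_nonneg _) (hSmootherNorm k hkL 1 le_rfl)
        haveI : Nonempty (Fin (n (k+1))) := by
          rcases Nat.eq_zero_or_pos (n (k+1)) with h0 | hpos'
          · exfalso
            haveI : IsEmpty (Fin (n (k+1))) := by rw [h0]; infer_instance
            exact hPx₀ (Subsingleton.elim _ _)
          · exact Fin.pos_iff_nonempty.mp hpos'
        have hAne : A (k+1) ≠ 0 := by
          intro h
          have hdet := (hA (k+1) hk1).det_pos
          rw [h, Matrix.det_zero] at hdet
          exact lt_irrefl 0 hdet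
        have hAnorm : 0 < specNorm (A (k+1)) := specNorm_pos hAne
        have hCA0 : 0 ≤ C_A := by
          have h := hApprox k hkL
          have h0 := specNorm_nonneg ((1 - P k * (A k)⁻¹ * (P k)ᵀ * A (k+1)) * (A (k+1))⁻¹)
          have h1 : 0 ≤ C_A / specNorm (A (k+1)) := le_trans h0 h
          have h2 := mul_nonneg h1 hAnorm.le
          rwa [div_mul_cancel₀ _ hAnorm.ne'] at h2
        have hterm0 : 0 ≤ C_S + C_A * η ν₁ :=
          add_nonneg hCS0 (mul_nonneg hCA0 (hη0 ν₁))
        have hCp_lo : 0 < Cp_lo := by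
          by_contra hneg
          push_neg at hneg
          have h1 : C_S * Cp_lo ≤ 0 := mul_nonpos_iff.mpr (Or.inl ⟨hCS0, hneg⟩)
          have h2 : C_S * Cp_lo * Cp_hi ≤ 0 :=
            mul_nonpos_iff.mpr (Or.inr ⟨h1, hCp_hi.le⟩)
          have h3 : Cstar ≤ 0 := by
            rw [hCstar]
            exact mul_nonpos_iff.mpr (Or.inr ⟨h2, hterm0⟩)
          nlinarith
        -- matrix identity
        have hinv : (A (k+1))⁻¹ * A (k+1) = 1 :=
          Matrix.nonsing_inv_mul _ (isUnit_iff_ne_zero.mpr (hA (k+1) hk1).det_pos.ne')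
        have hE1 : E (k+1) = (1 - N (k+1) * A (k+1)) ^ ν₂ *
            (1 - P k * (A k)⁻¹ * (P k)ᵀ * A (k+1)) * (1 - N (k+1) * A (k+1)) ^ ν₁ +
            (1 - N (k+1) * A (k+1)) ^ ν₂ *
              (P k * E k ^ γ *
                ((A k)⁻¹ * ((P k)ᵀ * (A (k+1) * (1 - N (k+1) * A (k+1)) ^ ν₁)))) := by
          rw [hErec k hkL]
          have expand : (1 : Matrix (Fin (n (k+1))) (Fin (n (k+1))) ℝ) -
              P k * (1 - E k ^ γ) * (A k)⁻¹ * (P k)ᵀ * A (k+1) =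
              (1 - P k * (A k)⁻¹ * (P k)ᵀ * A (k+1)) +
                P k * (E k ^ γ) * (A k)⁻¹ * (P k)ᵀ * A (k+1) := by
            simp only [Matrix.mul_sub, Matrix.sub_mul, Matrix.mul_one]
            abel
          rw [expand, Matrix.mul_add, Matrix.add_mul]
          congr 1
          simp only [Matrix.mul_assoc]
        -- bound on P k * W
        have hPWeq : P k * ((A k)⁻¹ * ((P k)ᵀ * (A (k+1) * (1 - N (k+1) * A (k+1)) ^ ν₁))) =
            (1 - N (k+1) * A (k+1)) ^ ν₁ -
              (1 - P k * (A k)⁻¹ * (P k)ᵀ * A (k+1)) * (A (k+1))⁻¹ *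
                (A (k+1) * (1 - N (k+1) * A (k+1)) ^ ν₁) := by
          have h1 : (1 - P k * (A k)⁻¹ * (P k)ᵀ * A (k+1)) * (A (k+1))⁻¹ *
              (A (k+1) * (1 - N (k+1) * A (k+1)) ^ ν₁) =
              (1 - N (k+1) * A (k+1)) ^ ν₁ -
                P k * (A k)⁻¹ * (P k)ᵀ * A (k+1) * (1 - N (k+1) * A (k+1)) ^ ν₁ := by
            rw [Matrix.mul_assoc ((1 : Matrix (Fin (n (k+1))) (Fin (n (k+1))) ℝ) -
                P k * (A k)⁻¹ * (P k)ᵀ * A (k+1)) ((A (k+1))⁻¹),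
              ← Matrix.mul_assoc ((A (k+1))⁻¹), hinv, Matrix.one_mul,
              Matrix.sub_mul, Matrix.one_mul]
          rw [h1, sub_sub_cancel]
          simp only [Matrix.mul_assoc]
        have hPWle : specNorm (P k *
            ((A k)⁻¹ * ((P k)ᵀ * (A (k+1) * (1 - N (k+1) * A (k+1)) ^ ν₁)))) ≤
            C_S + C_A * η ν₁ := by
          rw [hPWeq]
          refine le_trans (specNorm_sub_le _ _) ?_
          have hb1 : specNorm ((1 - N (k+1) * A (k+1)) ^ ν₁) ≤ C_S :=
            hSmootherNorm k hkL ν₁ hν₁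
          have hb2 : specNorm ((1 - P k * (A k)⁻¹ * (P k)ᵀ * A (k+1)) * (A (k+1))⁻¹ *
              (A (k+1) * (1 - N (k+1) * A (k+1)) ^ ν₁)) ≤ C_A * η ν₁ := by
            refine le_trans (specNorm_mul_le _ _) ?_
            have hc2 := hApprox k hkL
            have hc3 := hSmooth k hkL ν₁
            calc specNorm ((1 - P k * (A k)⁻¹ * (P k)ᵀ * A (k+1)) * (A (k+1))⁻¹) *
                specNorm (A (k+1) * (1 - N (k+1) * A (k+1)) ^ ν₁)
                ≤ (C_A / specNorm (A (k+1))) * (η ν₁ * specNorm (A (k+1))) := by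
                  apply mul_le_mul hc2 hc3 (specNorm_nonneg _)
                  exact div_nonneg hCA0 hAnorm.le
              _ = C_A * η ν₁ := by
                  field_simp
          linarith
        have hWle : specNorm ((A k)⁻¹ * ((P k)ᵀ * (A (k+1) * (1 - N (k+1) * A (k+1)) ^ ν₁))) ≤
            Cp_lo * (C_S + C_A * η ν₁) := by
          have h1 : specNorm ((A k)⁻¹ * ((P k)ᵀ * (A (k+1) * (1 - N (k+1) * A (k+1)) ^ ν₁))) ≤
              Cp_lo * specNorm (P k *
                ((A k)⁻¹ * ((P k)ᵀ * (A (k+1) * (1 - N (k+1) * A (k+1)) ^ ν₁)))) := by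
            apply specNorm_le_bound _ (mul_nonneg hCp_lo.le (specNorm_nonneg _))
            intro x
            set W := (A k)⁻¹ * ((P k)ᵀ * (A (k+1) * (1 - N (k+1) * A (k+1)) ^ ν₁)) with hWdef
            have hlow := (hProl k hkL (W.mulVec x)).1
            have h2 : euclNorm (W.mulVec x) ≤ Cp_lo * euclNorm ((P k).mulVec (W.mulVec x)) := by
              have h3 := mul_le_mul_of_nonneg_left hlow hCp_lo.le
              rwa [← mul_assoc, mul_inv_cancel₀ hCp_lo.ne', one_mul] at h3
            rw [Matrix.mulVec_mulVec] at h2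
            calc euclNorm (W.mulVec x) ≤ Cp_lo * euclNorm ((P k * W).mulVec x) := h2
              _ ≤ Cp_lo * (specNorm (P k * W) * euclNorm x) :=
                  mul_le_mul_of_nonneg_left (euclNorm_mulVec_le _ _) hCp_lo.le
              _ = Cp_lo * specNorm (P k * W) * euclNorm x := (mul_assoc _ _ _).symm
          exact le_trans h1 (mul_le_mul_of_nonneg_left hPWle hCp_lo.le)
        -- put it together
        have hbS2 : specNorm ((1 - N (k+1) * A (k+1)) ^ ν₂) ≤ C_S :=
          hSmootherNorm k hkL ν₂ hν₂
        have hbP : specNorm (P k) ≤ Cp_hi :=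
          specNorm_le_bound _ hCp_hi.le (fun x => (hProl k hkL x).2)
        have hbE : specNorm (E k ^ γ) ≤ ((γ:ℝ)/((γ:ℝ)-1) * ξ)^γ :=
          le_trans (specNorm_pow_le _ γ (by omega))
            (pow_le_pow_left₀ (specNorm_nonneg _) hIH γ)
        have hbR : specNorm (P k * E k ^ γ *
            ((A k)⁻¹ * ((P k)ᵀ * (A (k+1) * (1 - N (k+1) * A (k+1)) ^ ν₁)))) ≤
            Cp_hi * ((γ:ℝ)/((γ:ℝ)-1) * ξ)^γ * (Cp_lo * (C_S + C_A * η ν₁)) := by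
          refine le_trans (specNorm_mul_le _ _) ?_
          have h1 : specNorm (P k * E k ^ γ) ≤ Cp_hi * ((γ:ℝ)/((γ:ℝ)-1) * ξ)^γ :=
            le_trans (specNorm_mul_le _ _)
              (mul_le_mul hbP hbE (specNorm_nonneg _) hCp_hi.le)
          exact mul_le_mul h1 hWle (specNorm_nonneg _) (by positivity)
        have hb5 : specNorm ((1 - N (k+1) * A (k+1)) ^ ν₂ *
            (P k * E k ^ γ *
              ((A k)⁻¹ * ((P k)ᵀ * (A (k+1) * (1 - N (k+1) * A (k+1)) ^ ν₁))))) ≤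
            Cstar * ((γ:ℝ)/((γ:ℝ)-1) * ξ)^γ := by
          refine le_trans (specNorm_mul_le _ _) ?_
          refine le_trans (mul_le_mul hbS2 hbR (specNorm_nonneg _) hCS0) (le_of_eq ?_)
          rw [hCstar]; ring
        have hfinal1 : specNorm (E (k+1)) ≤ ξ + Cstar * ((γ:ℝ)/((γ:ℝ)-1) * ξ)^γ := by
          rw [hE1]
          refine le_trans (specNorm_add_le _ _) ?_
          linarith
        exact le_trans hfinal1 harith
  exact ⟨key l hlL, hlt⟩
end

section
/- Let X_R be a random diagonal matrix in ℝ^{m×m} and X_ρ a random diagonal matrix in ℝ^{n×n}, independent of each other, with E[X_R] = e_R I, E[X_ρ] = e_ρ I, max_{i,j}|Cov((X_R)_ii,(X_R)_jj)| ≤ ε_R and max_{i,j}|Cov((X_ρ)_ii,(X_ρ)_jj)| ≤ ε_ρ. Then for any matrix R ∈ ℝ^{m×n}, ‖E[(X_R R X_ρ) ⊗ (X_R R X_ρ)]‖₂ ≤ (ε_R + e_R²)(ε_ρ + e_ρ²)‖R‖₂². -/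
open Matrix MeasureTheory ProbabilityTheory
open scoped Kronecker ENNReal

/-- Entrywise expectation of a random matrix. -/
noncomputable def matExp {Ω : Type*} [MeasurableSpace Ω] (μ : Measure Ω)
    {m n : Type*} (X : Ω → Matrix m n ℝ) : Matrix m n ℝ :=
  Matrix.of fun i j => ∫ ω, X ω i j ∂μ

/-- Covariance of two real random variables. -/
noncomputable def cov {Ω : Type*} [MeasurableSpace Ω] (μ : Measure Ω) (f g : Ω → ℝ) : ℝ :=
  (∫ ω, f ω * g ω ∂μ) - (∫ ω, f ω ∂μ) * (∫ ω, g ω ∂μ)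


lemma eunorm_sq {ι : Type*} [Fintype ι] (v : EuclideanSpace ℝ ι) : ‖v‖^2 = ∑ i, v i ^2 := by
  rw [EuclideanSpace.norm_eq, Real.sq_sqrt (by positivity)]
  simp [sq_abs]

lemma toEL_apply {a b : Type*} [Fintype a] [Fintype b] [DecidableEq b]
    (M : Matrix a b ℝ) (x : EuclideanSpace ℝ b) (i : a) :
    Matrix.toEuclideanLin M x i = ∑ j, M i j * x j := by
  rw [Matrix.toEuclideanLin_apply]
  simp [Matrix.mulVec, dotProduct]

lemma specNorm_bound_apply {a b : Type*} [Fintype a] [Fintype b] [DecidableEq b]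
    (M : Matrix a b ℝ) (x : EuclideanSpace ℝ b) :
    ‖Matrix.toEuclideanLin M x‖ ≤ specNorm M * ‖x‖ := by
  have := (LinearMap.toContinuousLinearMap (Matrix.toEuclideanLin M)).le_opNorm x
  simpa [specNorm] using this

lemma L1 {a b k : Type*} [Fintype a] [Fintype b] [Fintype k] [DecidableEq b]
    (R : Matrix a b ℝ) (Y : Matrix b k ℝ) :
    ∑ i, ∑ l, ((R * Y) i l)^2 ≤ specNorm R ^2 * ∑ j, ∑ l, (Y j l)^2 := by
  rw [Finset.sum_comm, Finset.sum_comm (s := Finset.univ) (t := Finset.univ)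
    (f := fun j l => (Y j l)^2), Finset.mul_sum]
  apply Finset.sum_le_sum
  intro l _
  set x : EuclideanSpace ℝ b := (WithLp.equiv 2 (b → ℝ)).symm (fun j => Y j l) with hx
  have h1 : ∀ i, (R * Y) i l = Matrix.toEuclideanLin R x i := by
    intro i; rw [toEL_apply]; simp [Matrix.mul_apply, hx, WithLp.equiv_symm_apply, PiLp.toLp_apply]
  have h2 : ∑ i, ((R * Y) i l)^2 = ‖Matrix.toEuclideanLin R x‖^2 := by
    rw [eunorm_sq]; exact Finset.sum_congr rfl fun i _ => by rw [h1]
  have h3 : ‖x‖^2 = ∑ j, (Y j l)^2 := by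
    rw [eunorm_sq]; exact Finset.sum_congr rfl fun j _ => by simp [hx, WithLp.equiv_symm_apply, PiLp.toLp_apply]
  rw [h2, ← h3, ← mul_pow]
  exact pow_le_pow_left₀ (norm_nonneg _) (specNorm_bound_apply R x) 2

lemma specNorm_zero_of_empty_row {a b : Type*} [Fintype a] [Fintype b] [DecidableEq b]
    [IsEmpty a] (M : Matrix a b ℝ) : specNorm M = 0 := by
  unfold specNorm
  rw [norm_eq_zero]
  ext x i
  exact isEmptyElim i

lemma specNorm_zero_of_empty_col {a b : Type*} [Fintype a] [Fintype b] [DecidableEq b]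
    [IsEmpty b] (M : Matrix a b ℝ) : specNorm M = 0 := by
  unfold specNorm
  rw [norm_eq_zero]
  ext x
  have : x = 0 := Subsingleton.elim x 0
  rw [this]
  simp

/-- For independent random diagonal matrices `X_R`, `X_ρ` with `E[X_R] = e_R I`,
`E[X_ρ] = e_ρ I` and covariances bounded by `ε_R`, `ε_ρ`, one has
`‖E[(X_R R X_ρ) ⊗ (X_R R X_ρ)]‖₂ ≤ (ε_R + e_R²)(ε_ρ + e_ρ²)‖R‖₂²`. -/
theorem stmt_10 {Ω : Type*} [MeasurableSpace Ω] (μ : Measure Ω) [IsProbabilityMeasure μ]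
    (m n : ℕ) (XR : Ω → Fin m → ℝ) (Xρ : Ω → Fin n → ℝ)
    (hXR : ∀ i, MemLp (fun ω => XR ω i) 2 μ)
    (hXρ : ∀ i, MemLp (fun ω => Xρ ω i) 2 μ)
    (hIndep : IndepFun XR Xρ μ)
    (eR eρ εR ερ : ℝ)
    (hmR : ∀ i, ∫ ω, XR ω i ∂μ = eR)
    (hmρ : ∀ i, ∫ ω, Xρ ω i ∂μ = eρ)
    (hcR : ∀ i j, |cov μ (fun ω => XR ω i) (fun ω => XR ω j)| ≤ εR)
    (hcρ : ∀ i j, |cov μ (fun ω => Xρ ω i) (fun ω => Xρ ω j)| ≤ ερ)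
    (R : Matrix (Fin m) (Fin n) ℝ) :
    specNorm (matExp μ fun ω =>
        (Matrix.diagonal (XR ω) * R * Matrix.diagonal (Xρ ω)) ⊗ₖ
          (Matrix.diagonal (XR ω) * R * Matrix.diagonal (Xρ ω)))
      ≤ (εR + eR ^ 2) * (ερ + eρ ^ 2) * specNorm R ^ 2 := by
  classical
  -- dispatch degenerate cases
  rcases Nat.eq_zero_or_pos m with hm | hm
  · subst hm
    rw [specNorm_zero_of_empty_row, specNorm_zero_of_empty_row]
    simp
  rcases Nat.eq_zero_or_pos n with hn | hn
  · subst hn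
    rw [specNorm_zero_of_empty_col, specNorm_zero_of_empty_col]
    simp
  set A : Fin m → Fin m → ℝ := fun i i' => ∫ ω, XR ω i * XR ω i' ∂μ with hA
  set B : Fin n → Fin n → ℝ := fun j j' => ∫ ω, Xρ ω j * Xρ ω j' ∂μ with hB
  set c1 : ℝ := εR + eR ^ 2 with hc1
  set c2 : ℝ := ερ + eρ ^ 2 with hc2
  set sn : ℝ := specNorm R with hsn
  have hAbound : ∀ i i', |A i i'| ≤ c1 := by
    intro i i'
    have hrw : A i i' = cov μ (fun ω => XR ω i) (fun ω => XR ω i') + eR ^ 2 := by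
      simp [cov, hA, hmR, sq]
    rw [hrw]
    calc |cov μ (fun ω => XR ω i) (fun ω => XR ω i') + eR ^ 2|
        ≤ |cov μ (fun ω => XR ω i) (fun ω => XR ω i')| + |eR ^ 2| := abs_add_le _ _
      _ ≤ εR + eR ^ 2 :=
          add_le_add (hcR i i') (le_of_eq (abs_of_nonneg (sq_nonneg eR)))
  have hBbound : ∀ j j', |B j j'| ≤ c2 := by
    intro j j'
    have hrw : B j j' = cov μ (fun ω => Xρ ω j) (fun ω => Xρ ω j') + eρ ^ 2 := by
      simp [cov, hB, hmρ, sq]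
    rw [hrw]
    calc |cov μ (fun ω => Xρ ω j) (fun ω => Xρ ω j') + eρ ^ 2|
        ≤ |cov μ (fun ω => Xρ ω j) (fun ω => Xρ ω j')| + |eρ ^ 2| := abs_add_le _ _
      _ ≤ ερ + eρ ^ 2 :=
          add_le_add (hcρ j j') (le_of_eq (abs_of_nonneg (sq_nonneg eρ)))
  have hc1nn : 0 ≤ c1 := by
    have i0 : Fin m := ⟨0, hm⟩
    have h0 : 0 ≤ A i0 i0 := integral_nonneg fun ω => mul_self_nonneg _
    exact le_trans (le_trans h0 (le_abs_self _)) (hAbound i0 i0)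
  have hc2nn : 0 ≤ c2 := by
    have j0 : Fin n := ⟨0, hn⟩
    have h0 : 0 ≤ B j0 j0 := integral_nonneg fun ω => mul_self_nonneg _
    exact le_trans (le_trans h0 (le_abs_self _)) (hBbound j0 j0)
  set M : Matrix (Fin m × Fin m) (Fin n × Fin n) ℝ := matExp μ (fun ω =>
        (Matrix.diagonal (XR ω) * R * Matrix.diagonal (Xρ ω)) ⊗ₖ
          (Matrix.diagonal (XR ω) * R * Matrix.diagonal (Xρ ω))) with hM
  have hentry : ∀ p q, M p q = A p.1 p.2 * B q.1 q.2 * (R p.1 q.1 * R p.2 q.2) := by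
    intro p q
    have hind : IndepFun (fun ω => XR ω p.1 * XR ω p.2) (fun ω => Xρ ω q.1 * Xρ ω q.2) μ := by
      have h := hIndep.comp (φ := fun v : Fin m → ℝ => v p.1 * v p.2)
        (ψ := fun v : Fin n → ℝ => v q.1 * v q.2)
        (by fun_prop)
        (by fun_prop)
      exact h
    have hm1 : AEStronglyMeasurable (fun ω => XR ω p.1 * XR ω p.2) μ :=
      ((hXR p.1).aestronglyMeasurable.mul (hXR p.2).aestronglyMeasurable)
    have hm2 : AEStronglyMeasurable (fun ω => Xρ ω q.1 * Xρ ω q.2) μ :=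
      ((hXρ q.1).aestronglyMeasurable.mul (hXρ q.2).aestronglyMeasurable)
    have key : ∫ ω, (XR ω p.1 * XR ω p.2) * (Xρ ω q.1 * Xρ ω q.2) ∂μ
        = (∫ ω, XR ω p.1 * XR ω p.2 ∂μ) * (∫ ω, Xρ ω q.1 * Xρ ω q.2 ∂μ) :=
      hind.integral_mul_eq_mul_integral hm1 hm2
    have hfun : (fun ω => ((Matrix.diagonal (XR ω) * R * Matrix.diagonal (Xρ ω)) ⊗ₖ
            (Matrix.diagonal (XR ω) * R * Matrix.diagonal (Xρ ω))) p q)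
        = fun ω => (R p.1 q.1 * R p.2 q.2) *
            ((XR ω p.1 * XR ω p.2) * (Xρ ω q.1 * Xρ ω q.2)) := by
      funext ω
      simp [Matrix.kroneckerMap_apply, Matrix.mul_apply, Matrix.diagonal, Matrix.mul_diagonal,
        Matrix.diagonal_mul]
      ring
    rw [hM, matExp, Matrix.of_apply, hfun, integral_const_mul, key, hA, hB]
    ring
  -- main estimate
  rw [show specNorm M ≤ c1 * c2 * sn ^ 2 ↔ True from iff_of_true ?_ trivial]
  · trivial
  unfold specNorm
  apply ContinuousLinearMap.opNorm_le_bound _ (by positivity)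
  intro x
  rw [LinearMap.coe_toContinuousLinearMap']
  set Z : Matrix (Fin n) (Fin n) ℝ := Matrix.of (fun j j' => B j j' * x (j, j')) with hZ
  set W : Matrix (Fin m) (Fin m) ℝ := R * Z * Rᵀ with hW
  have hMx : ∀ p : Fin m × Fin m, Matrix.toEuclideanLin M x p = A p.1 p.2 * W p.1 p.2 := by
    intro p
    rw [toEL_apply]
    rw [Fintype.sum_prod_type]
    have hWent : W p.1 p.2 = ∑ j, ∑ j', R p.1 j * Z j j' * R p.2 j' := by
      rw [hW, Matrix.mul_apply]
      rw [Finset.sum_comm]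
      refine Finset.sum_congr rfl fun j _ => ?_
      rw [Matrix.mul_apply, Finset.sum_mul]
      exact Finset.sum_congr rfl fun j' _ => by rw [Matrix.transpose_apply]
    rw [hWent, Finset.mul_sum]
    refine Finset.sum_congr rfl fun j _ => ?_
    rw [Finset.mul_sum]
    refine Finset.sum_congr rfl fun j' _ => ?_
    rw [hentry (p.1, p.2) (j, j')]
    simp [hZ]
    ring
  have step1 : ‖Matrix.toEuclideanLin M x‖^2 ≤ c1^2 * ∑ i, ∑ i', (W i i')^2 := by
    rw [eunorm_sq]
    calc ∑ p : Fin m × Fin m, (Matrix.toEuclideanLin M x p)^2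
        = ∑ p : Fin m × Fin m, (A p.1 p.2)^2 * (W p.1 p.2)^2 := by
          refine Finset.sum_congr rfl fun p _ => by rw [hMx, mul_pow]
      _ ≤ ∑ p : Fin m × Fin m, c1^2 * (W p.1 p.2)^2 := by
          refine Finset.sum_le_sum fun p _ => ?_
          refine mul_le_mul_of_nonneg_right ?_ (sq_nonneg _)
          have := pow_le_pow_left₀ (abs_nonneg _) (hAbound p.1 p.2) 2
          rwa [sq_abs] at this
      _ = c1^2 * ∑ i, ∑ i', (W i i')^2 := by
          rw [← Finset.mul_sum, Fintype.sum_prod_type]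
  have step2 : ∑ i, ∑ i', (W i i')^2 ≤ sn^2 * ∑ j, ∑ i', ((Z * Rᵀ) j i')^2 := by
    have := L1 R (Z * Rᵀ)
    rwa [← Matrix.mul_assoc] at this
  have step3 : ∑ j, ∑ i', ((Z * Rᵀ) j i')^2 ≤ sn^2 * ∑ j', ∑ j, (Z j j')^2 := by
    have h := L1 R Zᵀ
    have hent : ∀ j i', (Z * Rᵀ) j i' = (R * Zᵀ) i' j := by
      intro j i'
      rw [Matrix.mul_apply, Matrix.mul_apply]
      exact Finset.sum_congr rfl fun l _ => by
        rw [Matrix.transpose_apply, Matrix.transpose_apply]; ring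
    calc ∑ j, ∑ i', ((Z * Rᵀ) j i')^2
        = ∑ i', ∑ j, ((R * Zᵀ) i' j)^2 := by
          rw [Finset.sum_comm]
          exact Finset.sum_congr rfl fun i' _ => Finset.sum_congr rfl fun j _ => by rw [hent]
      _ ≤ sn^2 * ∑ j', ∑ j, (Zᵀ j' j)^2 := h
      _ = sn^2 * ∑ j', ∑ j, (Z j j')^2 := rfl
  have step4 : ∑ j', ∑ j, (Z j j')^2 ≤ c2^2 * ‖x‖^2 := by
    rw [eunorm_sq, Fintype.sum_prod_type, Finset.mul_sum]
    rw [Finset.sum_comm]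
    refine Finset.sum_le_sum fun j _ => ?_
    rw [Finset.mul_sum]
    refine Finset.sum_le_sum fun j' _ => ?_
    rw [hZ]
    simp only [Matrix.of_apply, mul_pow]
    refine mul_le_mul_of_nonneg_right ?_ (sq_nonneg _)
    have := pow_le_pow_left₀ (abs_nonneg _) (hBbound j j') 2
    rwa [sq_abs] at this
  -- combine
  have sq_final : ‖Matrix.toEuclideanLin M x‖^2 ≤ (c1 * c2 * sn^2 * ‖x‖)^2 := by
    have h2 : ∑ i, ∑ i', (W i i')^2 ≤ sn^2 * (sn^2 * (c2^2 * ‖x‖^2)) := by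
      refine le_trans step2 (mul_le_mul_of_nonneg_left ?_ (sq_nonneg _))
      exact le_trans step3 (mul_le_mul_of_nonneg_left step4 (sq_nonneg _))
    calc ‖Matrix.toEuclideanLin M x‖^2
        ≤ c1^2 * ∑ i, ∑ i', (W i i')^2 := step1
      _ ≤ c1^2 * (sn^2 * (sn^2 * (c2^2 * ‖x‖^2))) :=
          mul_le_mul_of_nonneg_left h2 (sq_nonneg _)
      _ = (c1 * c2 * sn^2 * ‖x‖)^2 := by ring
  have hrhs : 0 ≤ c1 * c2 * sn^2 * ‖x‖ := by positivity
  exact le_of_pow_le_pow_left₀ two_ne_zero hrhs sq_final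
end

section
/- Let X be a random diagonal matrix in ℝ^{n×n} with E[X] = e·I, and let N, A ∈ ℝ^{n×n} be deterministic matrices. Then E[(I − X N A) ⊗ (I − X N A)] = (I − e N A) ⊗ (I − e N A) + V · ((N A) ⊗ (N A)), where V is the diagonal n²×n² matrix whose ((i−1)n+j)-th diagonal entry is Cov(X_ii, X_jj). -/
open Matrix MeasureTheory
open scoped Kronecker

/-- For a random diagonal matrix `X` with `E[X] = e I` and deterministic `N`, `A`:
`E[(I - X N A) ⊗ (I - X N A)] = (I - e N A) ⊗ (I - e N A) + V ((N A) ⊗ (N A))`,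
where `V` is the diagonal matrix of covariances of the diagonal entries of `X`. -/
theorem stmt_18 {Ω : Type*} [MeasurableSpace Ω] (μ : Measure Ω) [IsProbabilityMeasure μ]
    (n : ℕ) (X : Ω → Fin n → ℝ)
    (hX : ∀ i, MemLp (fun ω => X ω i) 2 μ)
    (e : ℝ) (hmean : ∀ i, ∫ ω, X ω i ∂μ = e)
    (N A : Matrix (Fin n) (Fin n) ℝ) :
    matExp μ (fun ω =>
        (1 - Matrix.diagonal (X ω) * N * A) ⊗ₖ (1 - Matrix.diagonal (X ω) * N * A))
      = (1 - e • (N * A)) ⊗ₖ (1 - e • (N * A)) +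
          Matrix.diagonal (fun p : Fin n × Fin n =>
              cov μ (fun ω => X ω p.1) (fun ω => X ω p.2)) *
            ((N * A) ⊗ₖ (N * A)) := by
  have hint1 : ∀ i, Integrable (fun ω => X ω i) μ := fun i =>
    (hX i).integrable one_le_two
  have hint2 : ∀ i j, Integrable (fun ω => X ω i * X ω j) μ := fun i j => by
    have h : MemLp ((fun ω => X ω i) • fun ω => X ω j) 1 μ :=
      (hX j).smul (hX i)
    simpa [Pi.smul_apply, smul_eq_mul, Pi.mul_def] using h.integrable le_rfl
  ext ⟨i, j⟩ ⟨k, l⟩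
  have hE : (1 : Matrix (Fin n) (Fin n) ℝ) = 1 := rfl
  simp only [matExp, Matrix.of_apply, Matrix.kroneckerMap_apply, Matrix.sub_apply,
    Matrix.add_apply, Matrix.smul_apply, smul_eq_mul, Matrix.mul_assoc,
    Matrix.diagonal_mul]
  set a : ℝ := (1 : Matrix (Fin n) (Fin n) ℝ) i k with ha
  set b : ℝ := (1 : Matrix (Fin n) (Fin n) ℝ) j l with hb
  set mik : ℝ := (N * A) i k with hmik
  set mjl : ℝ := (N * A) j l with hmjl
  have hfun : (fun ω => (a - X ω i * mik) * (b - X ω j * mjl))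
      = fun ω => (a * b - (a * mjl) * X ω j) - ((b * mik) * X ω i
        - (mik * mjl) * (X ω i * X ω j)) := by
    funext ω; ring
  have I2 : Integrable (fun ω => a * mjl * X ω j) μ := (hint1 j).const_mul _
  have I3 : Integrable (fun ω => b * mik * X ω i) μ := (hint1 i).const_mul _
  have I4 : Integrable (fun ω => mik * mjl * (X ω i * X ω j)) μ := (hint2 i j).const_mul _
  have I1 : Integrable (fun ω => a * b - a * mjl * X ω j) μ := (integrable_const _).sub I2
  have I5 : Integrable (fun ω => b * mik * X ω i - mik * mjl * (X ω i * X ω j)) μ := I3.sub I4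
  have key : ∫ ω, (a - X ω i * mik) * (b - X ω j * mjl) ∂μ
      = a * b - (a * mjl) * e - ((b * mik) * e
        - (mik * mjl) * ∫ ω, X ω i * X ω j ∂μ) := by
    rw [hfun, integral_sub I1 I5, integral_sub (integrable_const _) I2, integral_sub I3 I4,
      integral_const_mul, integral_const_mul, integral_const_mul, integral_const, hmean, hmean]
    simp [integral_const_mul]
  rw [key, cov, hmean, hmean]
  ring
end
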